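/- Let ζ>0 and 0<α<2. Let ρ be a finite Borel measure on ℝ supported on [0,1] with ρ({0})=0 and ρ((0,λ]) ≤ λ^ζ for all λ ∈ [0,1]. Then for every n ≥ 1, (1/2)∫_{[0,1]} (1-αλ)^{2n} ρ(dλ) ≤ (1/2)·Γ(ζ+1)·(2nα)^{-ζ} + [if α>1 then (1/2)(α-1)^{2n} else 0]. -/

import Mathlib

open MeasureTheory Filter Set
open scoped Classical

lemma exp_eq_lintegral_aux (t : ℝ) (ht : 0 < t) (l : ℝ) :
    ENNReal.ofReal (Real.exp (-(t*l))) =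
      ∫⁻ u in Set.Ioi l, ENNReal.ofReal (t * Real.exp (-(t*u))) := by
  have hint : IntegrableOn (fun u : ℝ => t * Real.exp (-(t*u))) (Set.Ioi l) :=
    by have h := (exp_neg_integrableOn_Ioi l ht).const_mul t; simp only [neg_mul] at h; exact h
  rw [← ofReal_integral_eq_lintegral_ofReal hint
      (ae_of_all _ fun u => by positivity)]
  congr 1
  have hderiv : ∀ x ∈ Set.Ici l, HasDerivAt (fun u : ℝ => -Real.exp (-(t*u)))
      (t * Real.exp (-(t*x))) x := by
    intro x _
    have h1 : HasDerivAt (fun u : ℝ => -(t*u)) (-t) x := by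
      simpa using ((hasDerivAt_id x).const_mul t).fun_neg
    have := (Real.hasDerivAt_exp (-(t*x))).comp x h1
    have h2 : HasDerivAt (fun u : ℝ => -Real.exp (-(t*u))) (-(Real.exp (-(t*x)) * -t)) x :=
      this.fun_neg
    convert h2 using 1
    ring
  have htend : Tendsto (fun u : ℝ => -Real.exp (-(t*u))) atTop (nhds 0) := by
    have h1 : Tendsto (fun u : ℝ => -(t*u)) atTop atBot := by
      apply Filter.tendsto_neg_atTop_atBot.comp
      exact (tendsto_const_mul_atTop_of_pos ht).2 tendsto_id
    simpa using (Real.tendsto_exp_atBot.comp h1).neg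
  rw [integral_Ioi_of_hasDerivAt_of_tendsto' hderiv hint htend]
  simp

open scoped Classical

lemma exp_lintegral_bound (ζ t : ℝ) (hζ : 0 < ζ) (ht : 0 < t)
    (ρ : Measure ℝ) [IsFiniteMeasure ρ]
    (hpow : ∀ u : ℝ, ρ (Set.Icc 0 1 ∩ Set.Iio u) ≤ ENNReal.ofReal (u ^ ζ)) :
    ∫⁻ l in Set.Icc (0:ℝ) 1, ENNReal.ofReal (Real.exp (-(t * l))) ∂ρ ≤
      ENNReal.ofReal (Real.Gamma (ζ + 1) * t ^ (-ζ)) := by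
  set F : ℝ × ℝ → ENNReal :=
    fun p => if p.1 < p.2 then ENNReal.ofReal (t * Real.exp (-(t * p.2))) else 0 with hF
  have hFmeas : Measurable F := by
    apply Measurable.ite (measurableSet_lt measurable_fst measurable_snd)
    · exact (measurable_const.mul (measurable_snd.const_mul t).neg.exp).ennreal_ofReal
    · exact measurable_const
  have step1 : ∫⁻ l in Set.Icc (0:ℝ) 1, ENNReal.ofReal (Real.exp (-(t * l))) ∂ρ
      = ∫⁻ l in Set.Icc (0:ℝ) 1, ∫⁻ u, F (l, u) ∂(volume) ∂ρ := by
    apply lintegral_congr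
    intro l
    rw [exp_eq_lintegral_aux t ht l]
    rw [← lintegral_indicator measurableSet_Ioi _]
    apply lintegral_congr
    intro u
    by_cases h : l < u <;> simp [hF, Set.indicator, h]
  have step2 : ∫⁻ l in Set.Icc (0:ℝ) 1, ∫⁻ u, F (l, u) ∂(volume) ∂ρ
      = ∫⁻ u, ∫⁻ l in Set.Icc (0:ℝ) 1, F (l, u) ∂ρ ∂(volume) := by
    apply lintegral_lintegral_swap
    exact (hFmeas.comp measurable_id).aemeasurable
  have step3 : ∀ u : ℝ, ∫⁻ l in Set.Icc (0:ℝ) 1, F (l, u) ∂ρ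
      = ENNReal.ofReal (t * Real.exp (-(t * u))) * ρ (Set.Icc 0 1 ∩ Set.Iio u) := by
    intro u
    have : ∀ l : ℝ, F (l, u) =
        (Set.Iio u).indicator (fun _ => ENNReal.ofReal (t * Real.exp (-(t * u)))) l := by
      intro l
      by_cases h : l < u <;> simp [hF, Set.indicator, h]
    simp_rw [this]
    rw [lintegral_indicator measurableSet_Iio _, setLIntegral_const,
      Measure.restrict_apply measurableSet_Iio, Set.inter_comm]
  have hint0 : IntegrableOn (fun u : ℝ => t * (Real.exp (-(t*u)) * u ^ ζ)) (Set.Ioi 0) := by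
    have h := integrableOn_rpow_mul_exp_neg_mul_rpow (by linarith : (-1:ℝ) < ζ) zero_lt_one ht
    simpa [IntegrableOn, Real.rpow_one, neg_mul, mul_comm, mul_left_comm] using h.const_mul t
  have hval : ∫ u in Set.Ioi (0:ℝ), t * (Real.exp (-(t*u)) * u ^ ζ)
      = Real.Gamma (ζ+1) * t^(-ζ) := by
    rw [MeasureTheory.integral_const_mul]
    have h := Real.integral_rpow_mul_exp_neg_mul_Ioi (show (0:ℝ) < ζ+1 by linarith) ht
    simp only [add_sub_cancel_right] at h
    have h2 : ∫ u in Set.Ioi (0:ℝ), Real.exp (-(t*u)) * u ^ ζ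
        = (1/t) ^ (ζ+1) * Real.Gamma (ζ+1) := by
      rw [← h]
      exact setIntegral_congr_fun measurableSet_Ioi (fun x _ => by ring)
    have e : t ^ (-ζ) = t * t ^ (-(ζ+1)) := by
      rw [show -ζ = 1 + -(ζ+1) by ring, Real.rpow_add ht, Real.rpow_one]
    rw [h2, one_div, ← Real.rpow_neg_one t, ← Real.rpow_mul ht.le,
      show ((-1:ℝ))*(ζ+1) = -(ζ+1) by ring, e]
    ring
  have step4 : ∫⁻ u : ℝ, ENNReal.ofReal (t * Real.exp (-(t * u))) * ρ (Set.Icc 0 1 ∩ Set.Iio u)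
      ≤ ENNReal.ofReal (Real.Gamma (ζ + 1) * t ^ (-ζ)) := by
    have hptw : ∀ u : ℝ,
        ENNReal.ofReal (t * Real.exp (-(t * u))) * ρ (Set.Icc 0 1 ∩ Set.Iio u) ≤
        (Set.Ioi (0:ℝ)).indicator
          (fun u => ENNReal.ofReal (t * (Real.exp (-(t*u)) * u ^ ζ))) u := by
      intro u
      by_cases h : 0 < u
      · rw [Set.indicator_of_mem (Set.mem_Ioi.2 h)]
        calc ENNReal.ofReal (t * Real.exp (-(t * u))) * ρ (Set.Icc 0 1 ∩ Set.Iio u)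
            ≤ ENNReal.ofReal (t * Real.exp (-(t * u))) * ENNReal.ofReal (u ^ ζ) :=
              mul_le_mul_right (hpow u) _
          _ = ENNReal.ofReal (t * (Real.exp (-(t*u)) * u ^ ζ)) := by
              rw [← ENNReal.ofReal_mul (by positivity)]; ring_nf
      · rw [Set.indicator_of_notMem (by simpa using h)]
        have : Set.Icc (0:ℝ) 1 ∩ Set.Iio u = ∅ := by
          ext x; simp only [Set.mem_inter_iff, Set.mem_Icc, Set.mem_Iio, Set.mem_empty_iff_false,
            iff_false, not_and, and_imp]
          intro hx _ ; push_neg at h; intro hxu; linarith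
        simp [this]
    calc ∫⁻ u : ℝ, ENNReal.ofReal (t * Real.exp (-(t * u))) * ρ (Set.Icc 0 1 ∩ Set.Iio u)
        ≤ ∫⁻ u : ℝ, (Set.Ioi (0:ℝ)).indicator
            (fun u => ENNReal.ofReal (t * (Real.exp (-(t*u)) * u ^ ζ))) u :=
          lintegral_mono hptw
      _ = ∫⁻ u in Set.Ioi (0:ℝ), ENNReal.ofReal (t * (Real.exp (-(t*u)) * u ^ ζ)) :=
          lintegral_indicator measurableSet_Ioi _
      _ = ENNReal.ofReal (∫ u in Set.Ioi (0:ℝ), t * (Real.exp (-(t*u)) * u ^ ζ)) :=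
          (ofReal_integral_eq_lintegral_ofReal hint0
            ((ae_restrict_iff' measurableSet_Ioi).2 (ae_of_all _ fun u hu =>
              mul_nonneg ht.le (mul_nonneg (Real.exp_nonneg _)
                (Real.rpow_nonneg (le_of_lt (Set.mem_Ioi.mp hu)) _))))).symm
      _ = ENNReal.ofReal (Real.Gamma (ζ + 1) * t ^ (-ζ)) := by rw [hval]
  rw [step1, step2]
  simp_rw [step3]
  exact step4


/-- Gradient descent with constant learning rate `α ∈ (0,2)`: under the power-law
spectral condition `ρ((0,λ]) ≤ λ^ζ`, the loss at step `n ≥ 1` is bounded by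
`(1/2)Γ(ζ+1)(2nα)^{-ζ}` plus, when `α > 1`, the extra term `(1/2)(α-1)^{2n}`. -/
theorem gd_constant_rate_loss_upper_bound
    (ζ α : ℝ) (hζ : 0 < ζ) (hα0 : 0 < α) (hα2 : α < 2)
    (ρ : Measure ℝ) [IsFiniteMeasure ρ]
    (hsupp : ρ (Set.Icc (0:ℝ) 1)ᶜ = 0)
    (h0 : ρ {(0:ℝ)} = 0)
    (hpow : ∀ l ∈ Set.Icc (0:ℝ) 1, (ρ (Set.Ioc 0 l)).toReal ≤ l ^ ζ) :
    ∀ n : ℕ, 1 ≤ n →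
      (1/2) * ∫ l in Set.Icc (0:ℝ) 1, (1 - α * l) ^ (2 * n) ∂ρ ≤
        (1/2) * Real.Gamma (ζ + 1) * (2 * n * α) ^ (-ζ) +
          (if 1 < α then (1/2) * (α - 1) ^ (2 * n) else 0) := by
  intro n hn
  have hn1 : (1:ℝ) ≤ (n:ℝ) := by exact_mod_cast hn
  have ht : 0 < 2 * (n:ℝ) * α := by nlinarith
  set C : ℝ := if 1 < α then (α - 1) ^ (2 * n) else 0 with hC
  have hC0 : 0 ≤ C := by
    rw [hC]; split_ifs with h
    · exact pow_nonneg (by linarith) _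
    · exact le_rfl
  have hpow' : ∀ u : ℝ, ρ (Set.Icc 0 1 ∩ Set.Iio u) ≤ ENNReal.ofReal (u ^ ζ) := by
    intro u
    by_cases hu : 0 < u
    · have hsub : Set.Icc (0:ℝ) 1 ∩ Set.Iio u ⊆ insert 0 (Set.Ioc 0 (min u 1)) := by
        rintro x ⟨⟨hx0, hx1⟩, hxu⟩
        rcases eq_or_lt_of_le hx0 with h | h
        · exact Set.mem_insert_iff.2 (Or.inl h.symm)
        · exact Set.mem_insert_iff.2 (Or.inr ⟨h, le_min (le_of_lt hxu) hx1⟩)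
      have hm : min u 1 ∈ Set.Icc (0:ℝ) 1 := ⟨le_min hu.le zero_le_one, min_le_right _ _⟩
      calc ρ (Set.Icc 0 1 ∩ Set.Iio u) ≤ ρ (insert 0 (Set.Ioc 0 (min u 1))) :=
            measure_mono hsub
        _ ≤ ρ {0} + ρ (Set.Ioc 0 (min u 1)) := by
            rw [Set.insert_eq]; exact measure_union_le _ _
        _ = ρ (Set.Ioc 0 (min u 1)) := by rw [h0, zero_add]
        _ ≤ ENNReal.ofReal ((min u 1) ^ ζ) := by
            rw [ENNReal.le_ofReal_iff_toReal_le (measure_ne_top ρ _)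
              (Real.rpow_nonneg (le_min hu.le zero_le_one) _)]
            exact hpow _ hm
        _ ≤ ENNReal.ofReal (u ^ ζ) := ENNReal.ofReal_le_ofReal
            (Real.rpow_le_rpow (le_min hu.le zero_le_one) (min_le_left _ _) hζ.le)
    · have hemp : Set.Icc (0:ℝ) 1 ∩ Set.Iio u = ∅ := by
        ext x
        simp only [Set.mem_inter_iff, Set.mem_Icc, Set.mem_Iio, Set.mem_empty_iff_false,
          iff_false, not_and, and_imp]
        intro hx0 _ hxu
        push_neg at hu
        linarith
      simp [hemp]
  have hmass : ρ (Set.Icc (0:ℝ) 1) ≤ 1 := by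
    have hsub : Set.Icc (0:ℝ) 1 ⊆ insert 0 (Set.Ioc 0 1) := by
      rintro x ⟨hx0, hx1⟩
      rcases eq_or_lt_of_le hx0 with h | h
      · exact Set.mem_insert_iff.2 (Or.inl h.symm)
      · exact Set.mem_insert_iff.2 (Or.inr ⟨h, hx1⟩)
    calc ρ (Set.Icc (0:ℝ) 1) ≤ ρ (insert 0 (Set.Ioc 0 1)) := measure_mono hsub
      _ ≤ ρ {0} + ρ (Set.Ioc 0 1) := by rw [Set.insert_eq]; exact measure_union_le _ _
      _ = ρ (Set.Ioc 0 1) := by rw [h0, zero_add]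
      _ ≤ ENNReal.ofReal ((1:ℝ) ^ ζ) := by
          rw [ENNReal.le_ofReal_iff_toReal_le (measure_ne_top ρ _)
            (Real.rpow_nonneg zero_le_one _)]
          exact hpow 1 ⟨zero_le_one, le_rfl⟩
      _ = 1 := by rw [Real.one_rpow, ENNReal.ofReal_one]
  have hpt : ∀ l ∈ Set.Icc (0:ℝ) 1,
      (1 - α * l) ^ (2 * n) ≤ Real.exp (-(2 * (n:ℝ) * α * l)) + C := by
    rintro l ⟨hl0, hl1⟩
    by_cases h : α * l ≤ 1
    · have h1 : 0 ≤ 1 - α * l := by linarith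
      have h2 : 1 - α * l ≤ Real.exp (-(α * l)) := by
        have := Real.add_one_le_exp (-(α * l)); linarith
      have h3 : (1 - α * l) ^ (2 * n) ≤ (Real.exp (-(α * l))) ^ (2 * n) :=
        pow_le_pow_left₀ h1 h2 _
      have h4 : (Real.exp (-(α * l))) ^ (2 * n) = Real.exp (-(2 * (n:ℝ) * α * l)) := by
        rw [← Real.exp_nat_mul]; congr 1; push_cast; ring
      have h5 := Real.exp_nonneg (-(2 * (n:ℝ) * α * l))
      nlinarith [hC0]
    · push_neg at h
      have hα1 : 1 < α := by nlinarith
      have hCv : C = (α - 1) ^ (2 * n) := by rw [hC, if_pos hα1]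
      have he : (1 - α * l) ^ (2 * n) = (α * l - 1) ^ (2 * n) := by
        rw [show (1 - α * l) = -(α * l - 1) by ring, Even.neg_pow (even_two_mul n)]
      have hle : (α * l - 1) ^ (2 * n) ≤ (α - 1) ^ (2 * n) :=
        pow_le_pow_left₀ (by linarith) (by nlinarith) _
      have h5 := Real.exp_nonneg (-(2 * (n:ℝ) * α * l))
      rw [he, hCv]
      linarith
  have hnn : ∀ l : ℝ, 0 ≤ (1 - α * l) ^ (2 * n) :=
    fun l => (even_two_mul n).pow_nonneg _
  have hmeas : Measurable fun l : ℝ => (1 - α * l) ^ (2 * n) := by fun_prop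
  have heq : ∫ l in Set.Icc (0:ℝ) 1, (1 - α * l) ^ (2 * n) ∂ρ =
      (∫⁻ l in Set.Icc (0:ℝ) 1, ENNReal.ofReal ((1 - α * l) ^ (2 * n)) ∂ρ).toReal :=
    integral_eq_lintegral_of_nonneg_ae (ae_of_all _ hnn) hmeas.aestronglyMeasurable
  have hbound : ∫⁻ l in Set.Icc (0:ℝ) 1, ENNReal.ofReal ((1 - α * l) ^ (2 * n)) ∂ρ ≤
      ENNReal.ofReal (Real.Gamma (ζ + 1) * (2 * (n:ℝ) * α) ^ (-ζ) + C) := by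
    calc ∫⁻ l in Set.Icc (0:ℝ) 1, ENNReal.ofReal ((1 - α * l) ^ (2 * n)) ∂ρ
        ≤ ∫⁻ l in Set.Icc (0:ℝ) 1,
            (ENNReal.ofReal (Real.exp (-(2 * (n:ℝ) * α * l))) + ENNReal.ofReal C) ∂ρ := by
          apply lintegral_mono_ae
          refine (ae_restrict_iff' measurableSet_Icc).2 (ae_of_all _ fun l hl => ?_)
          calc ENNReal.ofReal ((1 - α * l) ^ (2 * n))
              ≤ ENNReal.ofReal (Real.exp (-(2 * (n:ℝ) * α * l)) + C) :=
                ENNReal.ofReal_le_ofReal (hpt l hl)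
            _ = _ := ENNReal.ofReal_add (Real.exp_nonneg _) hC0
      _ = (∫⁻ l in Set.Icc (0:ℝ) 1, ENNReal.ofReal (Real.exp (-(2 * (n:ℝ) * α * l))) ∂ρ)
            + ENNReal.ofReal C * ρ (Set.Icc 0 1) := by
          rw [lintegral_add_right _ measurable_const, lintegral_const,
            Measure.restrict_apply_univ]
      _ ≤ ENNReal.ofReal (Real.Gamma (ζ + 1) * (2 * (n:ℝ) * α) ^ (-ζ))
            + ENNReal.ofReal C * 1 :=
          add_le_add (exp_lintegral_bound ζ (2 * (n:ℝ) * α) hζ ht ρ hpow')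
            (mul_le_mul_right hmass _)
      _ = ENNReal.ofReal (Real.Gamma (ζ + 1) * (2 * (n:ℝ) * α) ^ (-ζ) + C) := by
          rw [mul_one, ← ENNReal.ofReal_add (by positivity) hC0]
  have hmain : ∫ l in Set.Icc (0:ℝ) 1, (1 - α * l) ^ (2 * n) ∂ρ ≤
      Real.Gamma (ζ + 1) * (2 * (n:ℝ) * α) ^ (-ζ) + C := by
    rw [heq]
    exact ENNReal.toReal_le_of_le_ofReal (add_nonneg (by positivity) hC0) hbound
  by_cases h : 1 < α
  · rw [hC, if_pos h] at hmain
    rw [if_pos h]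
    linarith
  · rw [hC, if_neg h] at hmain
    rw [if_neg h]
    linarith
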